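/- arXiv:1807.00326 — 2 statements merged into one kernel-verified Lean document; each statement's English description precedes it below -/
import Mathlib

section
/- Hard Lefschetz injectivity (pointwise linear-algebra form underlying Lemma 3.4, injective part): for all natural numbers p, k with 2p + 2k ≤ 2n (equivalently p + k ≤ n), the Lefschetz map L_ω^k : ⋀^p V → ⋀^{p+2k} V, α ↦ ω^k ∧ α, is injective; i.e., if α ∈ ⋀^p V and ω^k ∧ α = 0, then α = 0. -/
open ExteriorAlgebra

namespace HLaux

variable {V : Type*} [AddCommGroup V] [Module ℝ V]

/-- contraction by a dual element -/
noncomputable def ctr (d : Module.Dual ℝ V) : ExteriorAlgebra ℝ V →ₗ[ℝ] ExteriorAlgebra ℝ V :=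
  CliffordAlgebra.contractLeft d

theorem ctr_ι_mul (d : Module.Dual ℝ V) (a : V) (x : ExteriorAlgebra ℝ V) :
    ctr d (ι ℝ a * x) = d a • x - ι ℝ a * ctr d x :=
  CliffordAlgebra.contractLeft_ι_mul d a x

theorem ctr_one (d : Module.Dual ℝ V) : ctr d (1 : ExteriorAlgebra ℝ V) = 0 :=
  CliffordAlgebra.contractLeft_one _ _

theorem ctr_algebraMap (d : Module.Dual ℝ V) (r : ℝ) :
    ctr d (algebraMap ℝ (ExteriorAlgebra ℝ V) r) = 0 :=
  CliffordAlgebra.contractLeft_algebraMap _ _ _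

theorem mul_mem'' {a c : ℕ} {x y : ExteriorAlgebra ℝ V} (hx : x ∈ ⋀[ℝ]^a V)
    (hy : y ∈ ⋀[ℝ]^c V) : x * y ∈ ⋀[ℝ]^(a+c) V := by
  rw [exteriorPower, pow_add]
  exact Submodule.mul_mem_mul hx hy

theorem ι_mem_first (v : V) : ι ℝ v ∈ ⋀[ℝ]^1 V := by
  rw [exteriorPower, pow_one]; exact LinearMap.mem_range_self _ v

theorem one_mem_zeroth : (1 : ExteriorAlgebra ℝ V) ∈ ⋀[ℝ]^0 V := by
  rw [exteriorPower, pow_zero]; exact Submodule.one_le.mp le_rfl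

theorem ι_mul_mem {c : ℕ} {v : V} {y : ExteriorAlgebra ℝ V} (hy : y ∈ ⋀[ℝ]^c V) :
    ι ℝ v * y ∈ ⋀[ℝ]^(c+1) V := by
  have := mul_mem'' (a := 1) (c := c) (ι_mem_first v) hy
  rwa [Nat.add_comm] at this

theorem ctr_mem_zero (d : Module.Dual ℝ V) {x : ExteriorAlgebra ℝ V} (hx : x ∈ ⋀[ℝ]^0 V) :
    ctr d x = 0 := by
  rw [exteriorPower, pow_zero, Submodule.one_eq_range] at hx
  obtain ⟨r, rfl⟩ := hx
  exact ctr_algebraMap d r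

theorem span_exteriorPower_induction {p : ℕ} {P : ExteriorAlgebra ℝ V → Prop}
    (h0 : P 0) (hadd : ∀ x y, P x → P y → P (x + y)) (hsmul : ∀ (r : ℝ) x, P x → P (r • x))
    (hgen : ∀ v : Fin p → V, P (ιMulti ℝ p v)) :
    ∀ x ∈ ⋀[ℝ]^p V, P x := by
  intro x hx
  rw [← ιMulti_span_fixedDegree] at hx
  induction hx using Submodule.span_induction with
  | mem x hx => obtain ⟨v, rfl⟩ := hx; exact hgen v
  | zero => exact h0
  | add x y _ _ hx hy => exact hadd x y hx hy
  | smul r x _ hx => exact hsmul r x hx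

theorem ctr_mem_succ (d : Module.Dual ℝ V) {p : ℕ} :
    ∀ x ∈ ⋀[ℝ]^(p+1) V, ctr d x ∈ ⋀[ℝ]^p V := by
  induction p with
  | zero =>
    refine span_exteriorPower_induction (by simp) (fun x y hx hy => by
      rw [map_add]; exact Submodule.add_mem _ hx hy)
      (fun r x hx => by rw [map_smul]; exact Submodule.smul_mem _ _ hx) ?_
    intro v
    rw [ιMulti_succ_apply, ιMulti_zero_apply, ctr_ι_mul, ctr_one, mul_zero, sub_zero]
    exact Submodule.smul_mem _ _ one_mem_zeroth
  | succ q ih =>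
    refine span_exteriorPower_induction (by simp) (fun x y hx hy => by
      rw [map_add]; exact Submodule.add_mem _ hx hy)
      (fun r x hx => by rw [map_smul]; exact Submodule.smul_mem _ _ hx) ?_
    intro v
    rw [ιMulti_succ_apply, ctr_ι_mul]
    refine Submodule.sub_mem _ (Submodule.smul_mem _ _ ?_) ?_
    · exact ιMulti_range ℝ (q+1) (Set.mem_range_self _)
    · exact ι_mul_mem (ih _ (ιMulti_range ℝ (q+1) (Set.mem_range_self _)))

variable {n : ℕ} (b : Module.Basis (Fin n ⊕ Fin n) ℝ V)

/-- the symplectic form as an element of the exterior algebra -/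
noncomputable def om : ExteriorAlgebra ℝ V :=
  ∑ i : Fin n, ι ℝ (b (Sum.inl i)) * ι ℝ (b (Sum.inr i))

/-- the dual Lefschetz operator -/
noncomputable def Lam : ExteriorAlgebra ℝ V →ₗ[ℝ] ExteriorAlgebra ℝ V :=
  ∑ i : Fin n, (ctr (b.coord (Sum.inr i))) ∘ₗ (ctr (b.coord (Sum.inl i)))

/-- the number (degree-counting) operator -/
noncomputable def Nop : ExteriorAlgebra ℝ V →ₗ[ℝ] ExteriorAlgebra ℝ V :=
  ∑ j : Fin n ⊕ Fin n, (LinearMap.mulLeft ℝ (ι ℝ (b j))) ∘ₗ ctr (b.coord j)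

theorem om_mem : om b ∈ ⋀[ℝ]^2 V := by
  refine Submodule.sum_mem _ fun i _ => ?_
  exact mul_mem'' (a := 1) (c := 1) (ι_mem_first _) (ι_mem_first _)

theorem Lam_apply (x : ExteriorAlgebra ℝ V) :
    Lam b x = ∑ i : Fin n, ctr (b.coord (Sum.inr i)) (ctr (b.coord (Sum.inl i)) x) := by
  rw [Lam, LinearMap.sum_apply]; rfl

theorem Nop_apply (x : ExteriorAlgebra ℝ V) :
    Nop b x = ∑ j : Fin n ⊕ Fin n, ι ℝ (b j) * ctr (b.coord j) x := by
  rw [Nop, LinearMap.sum_apply]; rfl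

theorem om_pow_mul_mem {q : ℕ} (m : ℕ) {x : ExteriorAlgebra ℝ V} (hx : x ∈ ⋀[ℝ]^q V) :
    om b ^ m * x ∈ ⋀[ℝ]^(2*m+q) V := by
  induction m with
  | zero => simpa using hx
  | succ m ih =>
    have e1 : 2*(m+1)+q = 2+(2*m+q) := by ring
    rw [e1, pow_succ', mul_assoc]
    exact mul_mem'' (om_mem b) ih

theorem Lam_mem {p : ℕ} {x : ExteriorAlgebra ℝ V} (hx : x ∈ ⋀[ℝ]^(p+2) V) :
    Lam b x ∈ ⋀[ℝ]^p V := by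
  rw [Lam, LinearMap.sum_apply]
  refine Submodule.sum_mem _ fun i _ => ?_
  exact ctr_mem_succ _ _ (ctr_mem_succ _ _ hx)

theorem Lam_mem_zero {x : ExteriorAlgebra ℝ V} (hx : x ∈ ⋀[ℝ]^0 V) : Lam b x = 0 := by
  rw [Lam, LinearMap.sum_apply]
  refine Finset.sum_eq_zero fun i _ => ?_
  simp [ctr_mem_zero _ hx]

theorem Lam_mem_one {x : ExteriorAlgebra ℝ V} (hx : x ∈ ⋀[ℝ]^1 V) : Lam b x = 0 := by
  rw [Lam, LinearMap.sum_apply]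
  refine Finset.sum_eq_zero fun i _ => ?_
  exact ctr_mem_zero _ (ctr_mem_succ _ _ hx)

theorem Nop_one : Nop b (1 : ExteriorAlgebra ℝ V) = 0 := by
  rw [Nop, LinearMap.sum_apply]
  refine Finset.sum_eq_zero fun j _ => ?_
  simp [ctr_one]

theorem Nop_ι_mul (v : V) (x : ExteriorAlgebra ℝ V) :
    Nop b (ι ℝ v * x) = ι ℝ v * x + ι ℝ v * Nop b x := by
  have h1 : ∑ j : Fin n ⊕ Fin n, ι ℝ (b j) * (b.coord j v • x) = ι ℝ v * x := by
    calc ∑ j : Fin n ⊕ Fin n, ι ℝ (b j) * (b.coord j v • x)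
        = (∑ j : Fin n ⊕ Fin n, b.coord j v • ι ℝ (b j)) * x := by
          rw [Finset.sum_mul]
          exact Finset.sum_congr rfl fun j _ => by rw [mul_smul_comm, smul_mul_assoc]
      _ = ι ℝ v * x := by
          have : (∑ j : Fin n ⊕ Fin n, b.coord j v • ι ℝ (b j)) = ι ℝ v := by
            simp_rw [← map_smul, ← map_sum]
            congr 1
            simp only [Module.Basis.coord_apply]
            exact b.sum_repr v
          rw [this]
  have h2 : ∑ j : Fin n ⊕ Fin n, ι ℝ (b j) * (ι ℝ v * ctr (b.coord j) x)
      = -(ι ℝ v * Nop b x) := by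
    rw [Nop_apply, Finset.mul_sum, ← Finset.sum_neg_distrib]
    refine Finset.sum_congr rfl fun j _ => ?_
    have hswap : ι ℝ (b j) * ι ℝ v = -(ι ℝ v * ι ℝ (b j)) :=
      eq_neg_of_add_eq_zero_left (ι_add_mul_swap _ _)
    rw [← mul_assoc, hswap, neg_mul, mul_assoc]
  rw [Nop_apply]
  simp only [ctr_ι_mul, mul_sub]
  rw [Finset.sum_sub_distrib, h1, h2, sub_neg_eq_add]

theorem Nop_ιMulti (p : ℕ) (v : Fin p → V) :
    Nop b (ιMulti ℝ p v) = (p : ℝ) • ιMulti ℝ p v := by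
  induction p with
  | zero => simp [Nop_one]
  | succ q ih =>
    rw [ιMulti_succ_apply, Nop_ι_mul, ih _]
    rw [mul_smul_comm]
    push_cast
    rw [add_smul, one_smul, add_comm]

theorem Nop_eq {p : ℕ} : ∀ x ∈ ⋀[ℝ]^p V, Nop b x = (p : ℝ) • x := by
  refine span_exteriorPower_induction (by simp) (fun x y hx hy => by
    rw [map_add, hx, hy, smul_add]) (fun r x hx => by
    rw [map_smul, hx, smul_comm]) (fun v => Nop_ιMulti b p v)

theorem pair_comm (i j : Fin n) (x : ExteriorAlgebra ℝ V) :
    ctr (b.coord (Sum.inr i)) (ctr (b.coord (Sum.inl i))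
        (ι ℝ (b (Sum.inl j)) * (ι ℝ (b (Sum.inr j)) * x)))
      = (if j = i then
          x - ι ℝ (b (Sum.inr j)) * ctr (b.coord (Sum.inr i)) x
            - ι ℝ (b (Sum.inl j)) * ctr (b.coord (Sum.inl i)) x
          else 0)
        + ι ℝ (b (Sum.inl j)) * (ι ℝ (b (Sum.inr j))
            * ctr (b.coord (Sum.inr i)) (ctr (b.coord (Sum.inl i)) x)) := by
  rcases eq_or_ne j i with rfl | hij
  · have c1 : b.coord (Sum.inl j) (b (Sum.inl j)) = (1:ℝ) := by
      simp [Module.Basis.coord_apply, Module.Basis.repr_self_apply]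
    have c2 : b.coord (Sum.inl j) (b (Sum.inr j)) = (0:ℝ) := by
      simp [Module.Basis.coord_apply, Module.Basis.repr_self_apply]
    have c3 : b.coord (Sum.inr j) (b (Sum.inr j)) = (1:ℝ) := by
      simp [Module.Basis.coord_apply, Module.Basis.repr_self_apply]
    have c4 : b.coord (Sum.inr j) (b (Sum.inl j)) = (0:ℝ) := by
      simp [Module.Basis.coord_apply, Module.Basis.repr_self_apply]
    simp only [if_pos rfl, ctr_ι_mul, map_sub, map_smul, c1, c2, c3, c4, one_smul, zero_smul,
      zero_sub, sub_zero, mul_neg, map_neg, mul_sub, neg_neg, neg_sub]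
    abel_nf
    ac_rfl
  · have c1 : b.coord (Sum.inl i) (b (Sum.inl j)) = (0:ℝ) := by
      simp [Module.Basis.coord_apply, Module.Basis.repr_self_apply, hij, (Ne.symm hij)]
    have c2 : b.coord (Sum.inl i) (b (Sum.inr j)) = (0:ℝ) := by
      simp [Module.Basis.coord_apply, Module.Basis.repr_self_apply]
    have c3 : b.coord (Sum.inr i) (b (Sum.inr j)) = (0:ℝ) := by
      simp [Module.Basis.coord_apply, Module.Basis.repr_self_apply, hij, (Ne.symm hij)]
    have c4 : b.coord (Sum.inr i) (b (Sum.inl j)) = (0:ℝ) := by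
      simp [Module.Basis.coord_apply, Module.Basis.repr_self_apply]
    simp only [if_neg hij, ctr_ι_mul, map_sub, map_smul, c1, c2, c3, c4, one_smul, zero_smul,
      zero_sub, sub_zero, mul_neg, map_neg, mul_sub, neg_neg, neg_sub, zero_add]

theorem comm1 (x : ExteriorAlgebra ℝ V) :
    Lam b (om b * x) = (n:ℝ) • x - Nop b x + om b * Lam b x := by
  have expand : om b * x = ∑ j : Fin n, ι ℝ (b (Sum.inl j)) * (ι ℝ (b (Sum.inr j)) * x) := by
    rw [om, Finset.sum_mul]
    exact Finset.sum_congr rfl fun j _ => mul_assoc _ _ _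
  rw [expand, Lam_apply]
  have step : ∀ i : Fin n,
      ctr (b.coord (Sum.inr i)) (ctr (b.coord (Sum.inl i))
        (∑ j : Fin n, ι ℝ (b (Sum.inl j)) * (ι ℝ (b (Sum.inr j)) * x)))
      = (x - ι ℝ (b (Sum.inr i)) * ctr (b.coord (Sum.inr i)) x
            - ι ℝ (b (Sum.inl i)) * ctr (b.coord (Sum.inl i)) x)
        + ∑ j : Fin n, ι ℝ (b (Sum.inl j)) * (ι ℝ (b (Sum.inr j))
            * ctr (b.coord (Sum.inr i)) (ctr (b.coord (Sum.inl i)) x)) := by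
    intro i
    rw [map_sum, map_sum]
    rw [Finset.sum_congr rfl fun j _ => pair_comm b i j x]
    rw [Finset.sum_add_distrib]
    congr 1
    rw [Finset.sum_ite_eq' Finset.univ i
      (fun j => x - ι ℝ (b (Sum.inr j)) * ctr (b.coord (Sum.inr i)) x
            - ι ℝ (b (Sum.inl j)) * ctr (b.coord (Sum.inl i)) x)]
    simp
  rw [Finset.sum_congr rfl fun i _ => step i]
  rw [Finset.sum_add_distrib]
  congr 1
  · have : ∀ i : Fin n, x - ι ℝ (b (Sum.inr i)) * ctr (b.coord (Sum.inr i)) x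
            - ι ℝ (b (Sum.inl i)) * ctr (b.coord (Sum.inl i)) x
        = x - (ι ℝ (b (Sum.inl i)) * ctr (b.coord (Sum.inl i)) x
            + ι ℝ (b (Sum.inr i)) * ctr (b.coord (Sum.inr i)) x) := by
      intro i; abel
    rw [Finset.sum_congr rfl fun i _ => this i, Finset.sum_sub_distrib]
    congr 1
    · rw [Finset.sum_const, Finset.card_univ, Fintype.card_fin, Nat.cast_smul_eq_nsmul]
    · rw [Nop_apply, Fintype.sum_sum_type]
      rw [Finset.sum_add_distrib]
  · rw [om, Finset.sum_mul, Finset.sum_comm]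
    rw [Lam_apply]
    refine Finset.sum_congr rfl fun j _ => ?_
    rw [Finset.mul_sum]
    exact Finset.sum_congr rfl fun i _ => (mul_assoc _ _ _).symm

theorem comm {p : ℕ} {x : ExteriorAlgebra ℝ V} (hx : x ∈ ⋀[ℝ]^p V) :
    Lam b (om b * x) = ((n:ℝ) - (p:ℝ)) • x + om b * Lam b x := by
  rw [comm1, Nop_eq b x hx, sub_smul]

/-- iterated commutation relation -/
theorem commk {p : ℕ} (k : ℕ) {x : ExteriorAlgebra ℝ V} (hx : x ∈ ⋀[ℝ]^p V) :
    Lam b (om b ^ (k+1) * x) = om b ^ (k+1) * Lam b x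
      + (((k:ℝ)+1) * ((n:ℝ) - (p:ℝ) - (k:ℝ))) • (om b ^ k * x) := by
  induction k with
  | zero =>
    rw [pow_one, pow_zero, one_mul, comm b hx]
    have hc : (((0:ℕ):ℝ)+1) * ((n:ℝ) - (p:ℝ) - ((0:ℕ):ℝ)) = (n:ℝ) - (p:ℝ) := by
      push_cast; ring
    rw [hc, add_comm]
  | succ k ih =>
    have hmem : om b ^ (k+1) * x ∈ ⋀[ℝ]^(2*(k+1)+p) V := om_pow_mul_mem b (k+1) hx
    have e1 : om b ^ (k+1+1) * x = om b * (om b ^ (k+1) * x) := by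
      rw [pow_succ', mul_assoc]
    have e2 : om b * (om b ^ (k+1) * Lam b x) = om b ^ (k+1+1) * Lam b x := by
      rw [← mul_assoc, ← pow_succ']
    have e3 : om b * (om b ^ k * x) = om b ^ (k+1) * x := by
      rw [← mul_assoc, ← pow_succ']
    rw [e1, comm b hmem, ih, mul_add (om b), mul_smul_comm, e2, e3]
    push_cast
    module

set_option synthInstance.maxHeartbeats 1000000 in
include b in
theorem power_vanish {q : ℕ} (hq : 2*n < q) : (⋀[ℝ]^q V : Submodule ℝ (ExteriorAlgebra ℝ V)) = ⊥ := by
  have : FiniteDimensional ℝ V := Module.Finite.of_basis b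
  have hrank : Module.finrank ℝ V = 2*n := by
    rw [Module.finrank_eq_card_basis b]
    simp [two_mul]
  rw [← ιMulti_span_fixedDegree, Submodule.span_eq_bot]
  rintro x ⟨v, rfl⟩
  apply AlternatingMap.map_linearDependent
  intro hli
  have := hli.fintype_card_le_finrank
  rw [hrank, Fintype.card_fin] at this
  omega

include b in
theorem exteriorPower_fg (q : ℕ) :
    (⋀[ℝ]^q V : Submodule ℝ (ExteriorAlgebra ℝ V)).FG := by
  have : Module.Finite ℝ V := Module.Finite.of_basis b
  refine Submodule.FG.pow ?_ q
  rw [LinearMap.range_eq_map]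
  exact Submodule.FG.map _ (Module.finite_def.mp ‹_›)

include b in
theorem exteriorPower_findim (q : ℕ) :
    FiniteDimensional ℝ (⋀[ℝ]^q V : Submodule ℝ (ExteriorAlgebra ℝ V)) :=
  Module.Finite.iff_fg.mpr (exteriorPower_fg b q)

/-- the chain argument for primitive elements -/
theorem prim_chain {q : ℕ} (m : ℕ) {x : ExteriorAlgebra ℝ V} (hx : x ∈ ⋀[ℝ]^q V)
    (hprim : Lam b x = 0)
    (hcoef : ∀ j : ℕ, 1 ≤ j → j ≤ m → ((j:ℝ) * ((n:ℝ) - (q:ℝ) - (j:ℝ) + 1)) ≠ 0)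
    (h0 : om b ^ m * x = 0) : x = 0 := by
  induction m with
  | zero => simpa using h0
  | succ m ih =>
    have hL := commk b m hx
    rw [h0, map_zero, hprim, mul_zero, zero_add] at hL
    have hc : (((m:ℝ))+1) * ((n:ℝ) - (q:ℝ) - (m:ℝ)) ≠ 0 := by
      have := hcoef (m+1) (by omega) le_rfl
      push_cast at this ⊢
      convert this using 2
      ring
    have hzero : om b ^ m * x = 0 := by
      have := hL.symm
      exact (smul_eq_zero.mp this).resolve_left hc
    exact ih (fun j h1 hm => hcoef j h1 (by omega)) hzero

/-- the key induction showing injectivity-type statement for `c • x + ω Λ x = 0` -/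
theorem Jlem : ∀ q : ℕ, q ≤ n → ∀ x ∈ ⋀[ℝ]^q V, ∀ c : ℝ, 0 < c →
    c • x + om b * Lam b x = 0 → x = 0 := by
  intro q
  induction q using Nat.strong_induction_on with
  | _ q ih =>
    intro hq x hx c hc heq
    match q, hx, hq with
    | 0, hx, hq =>
      rw [Lam_mem_zero b hx, mul_zero, add_zero] at heq
      exact (smul_eq_zero.mp heq).resolve_left (ne_of_gt hc)
    | 1, hx, hq =>
      rw [Lam_mem_one b hx, mul_zero, add_zero] at heq
      exact (smul_eq_zero.mp heq).resolve_left (ne_of_gt hc)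
    | (q+2), hx, hq =>
      have hγ : Lam b x ∈ ⋀[ℝ]^q V := Lam_mem b hx
      have heq2 : (c + ((n:ℝ) - (q:ℝ))) • Lam b x + om b * Lam b (Lam b x) = 0 := by
        have := congrArg (Lam b) heq
        rw [map_add, map_zero, map_smul, comm b hγ] at this
        rw [add_smul]
        rw [add_assoc]
        exact this
      have hγ0 : Lam b x = 0 := by
        refine ih q (by omega) (by omega) _ hγ (c + ((n:ℝ) - (q:ℝ))) ?_ heq2
        have : (q:ℝ) ≤ (n:ℝ) := by exact_mod_cast (by omega : q ≤ n)
        linarith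
      rw [hγ0, mul_zero, add_zero] at heq
      exact (smul_eq_zero.mp heq).resolve_left (ne_of_gt hc)

theorem coef_pos {p j : ℕ} (hp : p ≤ n) (h1 : 1 ≤ j) (hj : j ≤ n - p) :
    ((j:ℝ) * ((n:ℝ) - (p:ℝ) - (j:ℝ) + 1)) ≠ 0 := by
  have hj' : j + p ≤ n := by omega
  have hc : (j:ℝ) + (p:ℝ) ≤ (n:ℝ) := by exact_mod_cast hj'
  have h1' : (1:ℝ) ≤ (j:ℝ) := by exact_mod_cast h1
  have haa : 0 < (j:ℝ) := by linarith
  have hbb : 0 < (n:ℝ) - (p:ℝ) - (j:ℝ) + 1 := by linarith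
  exact ne_of_gt (mul_pos haa hbb)

theorem lamL_surj {q : ℕ} (hq : q < n) :
    ∀ γ ∈ ⋀[ℝ]^q V, ∃ β ∈ ⋀[ℝ]^q V, Lam b (om b * β) = γ := by
  have hmap : ∀ x ∈ ⋀[ℝ]^q V, (Lam b ∘ₗ LinearMap.mulLeft ℝ (om b)) x ∈ ⋀[ℝ]^q V := by
    intro x hx
    have h2 : om b * x ∈ ⋀[ℝ]^(q+2) V := by
      have := mul_mem'' (om_mem b) hx
      rwa [Nat.add_comm] at this
    simpa using Lam_mem b h2
  haveI := exteriorPower_findim b q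
  set S : (⋀[ℝ]^q V : Submodule ℝ (ExteriorAlgebra ℝ V)) →ₗ[ℝ] (⋀[ℝ]^q V : Submodule ℝ (ExteriorAlgebra ℝ V)) :=
    (Lam b ∘ₗ LinearMap.mulLeft ℝ (om b)).restrict hmap with hS
  have hinj : Function.Injective S := by
    rw [← LinearMap.ker_eq_bot, LinearMap.ker_eq_bot']
    intro m hm
    have hm' : Lam b (om b * (m : ExteriorAlgebra ℝ V)) = 0 := by
      have h := congrArg (Subtype.val) hm
      simpa [hS, LinearMap.restrict_apply] using h
    have hc := comm b m.2
    rw [hm'] at hc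
    have heq : ((n:ℝ)-(q:ℝ)) • (m : ExteriorAlgebra ℝ V) + om b * Lam b (m : ExteriorAlgebra ℝ V) = 0 :=
      hc.symm
    have hpos : (0:ℝ) < (n:ℝ)-(q:ℝ) := by
      have : (q:ℝ) < (n:ℝ) := by exact_mod_cast hq
      linarith
    have := Jlem b q (by omega) (m : ExteriorAlgebra ℝ V) m.2 _ hpos heq
    exact Subtype.ext this
  have hsurj : Function.Surjective S := LinearMap.injective_iff_surjective.mp hinj
  intro γ hγ
  obtain ⟨β, hβ⟩ := hsurj ⟨γ, hγ⟩
  refine ⟨(β : ExteriorAlgebra ℝ V), β.2, ?_⟩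
  have h := congrArg (Subtype.val) hβ
  simpa [hS, LinearMap.restrict_apply] using h

theorem main' : ∀ p : ℕ, p ≤ n → ∀ x ∈ ⋀[ℝ]^p V, om b ^ (n - p) * x = 0 → x = 0 := by
  intro p
  induction p using Nat.strong_induction_on with
  | _ p ih =>
    intro hp x hx h0
    match p, hx, hp, h0 with
    | 0, hx, hp, h0 =>
      exact prim_chain b (n-0) hx (Lam_mem_zero b hx)
        (fun j h1 hj => coef_pos (p := 0) (by omega) h1 hj) h0
    | 1, hx, hp, h0 =>
      exact prim_chain b (n-1) hx (Lam_mem_one b hx)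
        (fun j h1 hj => coef_pos (p := 1) hp h1 hj) h0
    | (p'+2), hx, hp, h0 =>
      have hq' : p' < n := by omega
      have hΛx : Lam b x ∈ ⋀[ℝ]^p' V := Lam_mem b hx
      obtain ⟨β, hβmem, hβ⟩ := lamL_surj b hq' (Lam b x) hΛx
      have hωβ : om b * β ∈ ⋀[ℝ]^(p'+2) V := by
        have := mul_mem'' (om_mem b) hβmem
        rwa [Nat.add_comm] at this
      set π := x - om b * β with hπ
      have hπmem : π ∈ ⋀[ℝ]^(p'+2) V := Submodule.sub_mem _ hx hωβ
      have hπprim : Lam b π = 0 := by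
        rw [hπ, map_sub, hβ, sub_self]
      set k0 := n - (p'+2) with hk0
      -- δ := om^(k0+1) * π is primitive
      have hδprim : Lam b (om b ^ (k0+1) * π) = 0 := by
        rw [commk b k0 hπmem, hπprim, mul_zero, zero_add]
        have hcast : (n:ℝ) - ((p'+2 : ℕ):ℝ) - (k0:ℝ) = 0 := by
          have : ((k0:ℕ):ℝ) = (n:ℝ) - ((p'+2:ℕ):ℝ) := by
            rw [hk0]
            push_cast [Nat.cast_sub hp]
            ring
          rw [this]; ring
        rw [hcast, mul_zero, zero_smul]
      have hδmem : om b ^ (k0+1) * π ∈ ⋀[ℝ]^(2*(k0+1)+(p'+2)) V :=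
        om_pow_mul_mem b (k0+1) hπmem
      have hδ0 : om b ^ (n+1) * (om b ^ (k0+1) * π) = 0 := by
        have hmem := om_pow_mul_mem b (n+1) hδmem
        have hbig : 2*n < 2*(n+1) + (2*(k0+1)+(p'+2)) := by omega
        rw [power_vanish b hbig] at hmem
        simpa using hmem
      have hπ0 : om b ^ (k0+1) * π = 0 := by
        refine prim_chain b (n+1) hδmem hδprim ?_ hδ0
        intro j h1 hj
        have hqge : n + 2 ≤ 2*(k0+1)+(p'+2) := by omega
        have hqr : ((n:ℝ)) + 2 ≤ ((2*(k0+1)+(p'+2) : ℕ):ℝ) := by exact_mod_cast hqge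
        have h1' : (1:ℝ) ≤ (j:ℝ) := by exact_mod_cast h1
        have hneg : (n:ℝ) - ((2*(k0+1)+(p'+2) : ℕ):ℝ) - (j:ℝ) + 1 < 0 := by linarith
        exact mul_ne_zero (by positivity) (ne_of_lt hneg)
      -- om^(k0+1) * x = 0
      have hx1 : om b ^ (k0+1) * x = 0 := by
        rw [pow_succ', mul_assoc]
        have : om b ^ k0 * x = 0 := h0
        rw [this, mul_zero]
      -- deduce om^(n - p') * β = 0
      have hβ0 : β = 0 := by
        have hωβ0 : om b ^ (k0+1) * (om b * β) = 0 := by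
          have hsub : om b * β = x - π := by rw [hπ]; abel
          rw [hsub, mul_sub, hx1, hπ0, sub_zero]
        have hpow : om b ^ (n - p') * β = 0 := by
          have e : om b ^ (k0+2) * β = 0 := by
            rw [pow_succ, mul_assoc]
            exact hωβ0
          have e2 : k0 + 2 = n - p' := by omega
          rwa [e2] at e
        exact ih p' (by omega) (by omega) β hβmem hpow
      have hπx : π = x := by rw [hπ, hβ0, mul_zero, sub_zero]
      have hxprim : Lam b x = 0 := by rw [← hπx]; exact hπprim
      exact prim_chain b k0 hx hxprim
        (fun j h1 hj => coef_pos hp h1 (by omega)) h0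

end HLaux

open ExteriorAlgebra

/-- Hard Lefschetz injectivity (pointwise linear-algebra form): for `p + k ≤ n`, the
Lefschetz map `L_ω^k : ⋀^p V → ⋀^{p+2k} V`, `α ↦ ω^k ∧ α`, is injective: if
`α ∈ ⋀^p V` and `ω^k ∧ α = 0`, then `α = 0`. -/
theorem hard_lefschetz_injective
    {V : Type*} [AddCommGroup V] [Module ℝ V] (n : ℕ) (hn : 0 < n)
    (b : Module.Basis (Fin n ⊕ Fin n) ℝ V)
    (e f : Fin n → V) (he : ∀ i, e i = b (Sum.inl i)) (hf : ∀ i, f i = b (Sum.inr i))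
    (ω : ExteriorAlgebra ℝ V) (hω : ω = ∑ i : Fin n, ι ℝ (e i) * ι ℝ (f i))
    (p k : ℕ) (hpk : p + k ≤ n) :
    ∀ α ∈ ⋀[ℝ]^p V, ω ^ k * α = 0 → α = 0 := by
  intro α hα h0
  have hωom : ω = HLaux.om b := by
    rw [hω, HLaux.om]
    exact Finset.sum_congr rfl fun i _ => by rw [he, hf]
  have h0' : HLaux.om b ^ (n - p) * α = 0 := by
    have e : n - p = (n - p - k) + k := by omega
    rw [e, pow_add, mul_assoc, ← hωom, h0, mul_zero]
  exact HLaux.main' b p (by omega) α hα h0'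
end

section
/- Hard Lefschetz surjectivity (pointwise linear-algebra form underlying Lemma 3.4, surjective part): for all natural numbers p, k with 2p + 2k ≥ 2n (equivalently p + k ≥ n), the Lefschetz map L_ω^k : ⋀^p V → ⋀^{p+2k} V, α ↦ ω^k ∧ α, is surjective; i.e., every β ∈ ⋀^{p+2k} V can be written as β = ω^k ∧ α for some α ∈ ⋀^p V. -/
open ExteriorAlgebra

namespace HardLefschetzAux

open CliffordAlgebra

variable {V : Type*} [AddCommGroup V] [Module ℝ V]

lemma contract_mem_zero (d : Module.Dual ℝ V) {x : ExteriorAlgebra ℝ V}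
    (hx : x ∈ ⋀[ℝ]^0 V) : contractLeft d x = 0 := by
  rw [exteriorPower, pow_zero, Submodule.one_eq_range] at hx
  obtain ⟨r, rfl⟩ := hx
  simp only [Algebra.linearMap_apply]
  exact contractLeft_algebraMap (Q := (0 : QuadraticForm ℝ V)) d r

lemma mul_mem_pow {a c : ℕ} {x y : ExteriorAlgebra ℝ V} (hx : x ∈ ⋀[ℝ]^a V)
    (hy : y ∈ ⋀[ℝ]^c V) : x * y ∈ ⋀[ℝ]^(a + c) V := by
  rw [exteriorPower, pow_add]
  exact Submodule.mul_mem_mul hx hy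

lemma ι_mem_pow_one (v : V) : ι ℝ v ∈ ⋀[ℝ]^1 V := by
  rw [exteriorPower, pow_one]
  exact LinearMap.mem_range_self _ v

lemma contract_mem (d : Module.Dual ℝ V) {m : ℕ} {x : ExteriorAlgebra ℝ V}
    (hx : x ∈ ⋀[ℝ]^m V) : contractLeft d x ∈ ⋀[ℝ]^(m - 1) V := by
  refine Submodule.pow_induction_on_left'
    (M := LinearMap.range (ι ℝ : V →ₗ[ℝ] ExteriorAlgebra ℝ V))
    (C := fun i y _ => contractLeft d y ∈ ⋀[ℝ]^(i - 1) V) ?_ ?_ ?_ hx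
  · intro r
    simp only [Algebra.linearMap_apply, contractLeft_algebraMap (Q := (0 : QuadraticForm ℝ V))]
    exact Submodule.zero_mem _
  · intro x y i hx hy cx cy
    rw [map_add]
    exact Submodule.add_mem _ cx cy
  · rintro m' ⟨v, rfl⟩ i y hy cy
    rw [contractLeft_ι_mul]
    refine Submodule.sub_mem _ (Submodule.smul_mem _ _ ?_) ?_
    · simpa using hy
    · match i with
      | 0 =>
        rw [contract_mem_zero d hy, mul_zero]
        exact Submodule.zero_mem _
      | Nat.succ i =>
        have := mul_mem_pow (ι_mem_pow_one v) cy
        rw [show 1 + (i + 1 - 1) = i + 1 from by omega] at this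
        simpa using this

variable {n : ℕ} (b : Module.Basis (Fin n ⊕ Fin n) ℝ V)

noncomputable def Lam : ExteriorAlgebra ℝ V →ₗ[ℝ] ExteriorAlgebra ℝ V :=
  ∑ i : Fin n, (contractLeft (b.coord (Sum.inr i))).comp (contractLeft (b.coord (Sum.inl i)))

noncomputable def omegaB : ExteriorAlgebra ℝ V :=
  ∑ i : Fin n, ι ℝ (b (Sum.inl i)) * ι ℝ (b (Sum.inr i))

lemma omega_mem : omegaB b ∈ ⋀[ℝ]^2 V := by
  refine Submodule.sum_mem _ fun i _ => ?_
  exact mul_mem_pow (ι_mem_pow_one _) (ι_mem_pow_one _)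

lemma ι_swap_mul (v w : V) (c : ExteriorAlgebra ℝ V) :
    ι ℝ w * (ι ℝ v * c) = -(ι ℝ v * (ι ℝ w * c)) := by
  rw [← mul_assoc, ← mul_assoc, eq_neg_of_add_eq_zero_left (ι_add_mul_swap w v), neg_mul]

lemma euler {m : ℕ} {x : ExteriorAlgebra ℝ V} (hx : x ∈ ⋀[ℝ]^m V) :
    ∑ s : Fin n ⊕ Fin n, ι ℝ (b s) * contractLeft (b.coord s) x = (m : ℝ) • x := by
  refine Submodule.pow_induction_on_left'
    (M := LinearMap.range (ι ℝ : V →ₗ[ℝ] ExteriorAlgebra ℝ V))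
    (C := fun i y _ => ∑ s : Fin n ⊕ Fin n, ι ℝ (b s) * contractLeft (b.coord s) y
      = (i : ℝ) • y) ?_ ?_ ?_ hx
  · intro r
    simp [contractLeft_algebraMap (Q := (0 : QuadraticForm ℝ V))]
  · intro x y i hx hy cx cy
    simp only [map_add, mul_add, Finset.sum_add_distrib, smul_add, cx, cy]
  · rintro m' ⟨v, rfl⟩ i y hy cy
    calc ∑ s : Fin n ⊕ Fin n, ι ℝ (b s) * contractLeft (b.coord s) (ι ℝ v * y)
        = ∑ s : Fin n ⊕ Fin n, (b.coord s v • (ι ℝ (b s) * y)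
            + ι ℝ v * (ι ℝ (b s) * contractLeft (b.coord s) y)) := by
          refine Finset.sum_congr rfl fun s _ => ?_
          rw [contractLeft_ι_mul, mul_sub, mul_smul_comm, ι_swap_mul, sub_neg_eq_add]
      _ = (∑ s : Fin n ⊕ Fin n, b.coord s v • ι ℝ (b s)) * y
            + ι ℝ v * ∑ s : Fin n ⊕ Fin n, ι ℝ (b s) * contractLeft (b.coord s) y := by
          rw [Finset.sum_add_distrib, Finset.sum_mul, ← Finset.mul_sum]
          simp [smul_mul_assoc]
      _ = ι ℝ v * y + ι ℝ v * ((i : ℝ) • y) := by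
          rw [cy]
          congr 2
          rw [show (∑ s : Fin n ⊕ Fin n, b.coord s v • ι ℝ (b s))
              = ι ℝ (∑ s : Fin n ⊕ Fin n, b.coord s v • b s) from by
            rw [map_sum]; simp only [map_smul]]
          congr 1
          simp only [Module.Basis.coord_apply]
          exact b.sum_repr v
      _ = ((Nat.succ i : ℕ) : ℝ) • (ι ℝ v * y) := by
          push_cast
          rw [mul_smul_comm, add_smul, one_smul, add_comm]

lemma Lam_apply (x : ExteriorAlgebra ℝ V) : Lam b x
    = ∑ j : Fin n, contractLeft (b.coord (Sum.inr j)) (contractLeft (b.coord (Sum.inl j)) x) := by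
  simp [Lam]

lemma coord_apply_basis (s t : Fin n ⊕ Fin n) :
    b.coord s (b t) = if s = t then 1 else 0 := by
  rw [Module.Basis.coord_apply, Module.Basis.repr_self, Finsupp.single_apply]
  simp [eq_comm]

lemma contract2_pair (i j : Fin n) (x : ExteriorAlgebra ℝ V) :
    contractLeft (b.coord (Sum.inr j)) (contractLeft (b.coord (Sum.inl j))
      (ι ℝ (b (Sum.inl i)) * (ι ℝ (b (Sum.inr i)) * x)))
    = (if j = i then
        (x - ι ℝ (b (Sum.inr i)) * contractLeft (b.coord (Sum.inr j)) x
           - ι ℝ (b (Sum.inl i)) * contractLeft (b.coord (Sum.inl j)) x) else 0)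
      + ι ℝ (b (Sum.inl i)) * (ι ℝ (b (Sum.inr i)) *
          contractLeft (b.coord (Sum.inr j)) (contractLeft (b.coord (Sum.inl j)) x)) := by
  have c1 : b.coord (Sum.inl j) (b (Sum.inl i)) = if j = i then 1 else 0 := by
    rw [coord_apply_basis]; simp
  have c2 : b.coord (Sum.inl j) (b (Sum.inr i)) = 0 := by
    rw [coord_apply_basis]; simp
  have c3 : b.coord (Sum.inr j) (b (Sum.inr i)) = if j = i then 1 else 0 := by
    rw [coord_apply_basis]; simp
  have c4 : b.coord (Sum.inr j) (b (Sum.inl i)) = 0 := by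
    rw [coord_apply_basis]; simp
  by_cases h : j = i
  · simp only [contractLeft_ι_mul, map_add, map_sub, map_smul, mul_add, mul_sub,
      mul_smul_comm, smul_sub, smul_add, smul_smul, c1, c2, c3, c4, if_pos h, one_smul,
      zero_smul, zero_sub, sub_zero, mul_neg, map_neg, neg_neg, mul_zero, zero_mul,
      add_zero, zero_add, one_mul, mul_one]
    abel
  · simp only [contractLeft_ι_mul, map_add, map_sub, map_smul, mul_add, mul_sub,
      mul_smul_comm, smul_sub, smul_add, smul_smul, c1, c2, c3, c4, if_neg h, one_smul,
      zero_smul, zero_sub, sub_zero, mul_neg, map_neg, neg_neg, mul_zero, zero_mul,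
      add_zero, zero_add, one_mul, mul_one]

lemma omega_mul_expand (y : ExteriorAlgebra ℝ V) :
    omegaB b * y = ∑ i : Fin n, ι ℝ (b (Sum.inl i)) * (ι ℝ (b (Sum.inr i)) * y) := by
  rw [omegaB, Finset.sum_mul]
  simp [mul_assoc]

lemma lam_omega_raw (x : ExteriorAlgebra ℝ V) :
    Lam b (omegaB b * x) = omegaB b * Lam b x + (n : ℝ) • x
      - ∑ s : Fin n ⊕ Fin n, ι ℝ (b s) * contractLeft (b.coord s) x := by
  rw [Lam_apply, omega_mul_expand]
  calc ∑ j : Fin n, contractLeft (b.coord (Sum.inr j)) (contractLeft (b.coord (Sum.inl j))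
        (∑ i : Fin n, ι ℝ (b (Sum.inl i)) * (ι ℝ (b (Sum.inr i)) * x)))
      = ∑ j : Fin n, ∑ i : Fin n, ((if j = i then
          (x - ι ℝ (b (Sum.inr i)) * contractLeft (b.coord (Sum.inr j)) x
             - ι ℝ (b (Sum.inl i)) * contractLeft (b.coord (Sum.inl j)) x) else 0)
        + ι ℝ (b (Sum.inl i)) * (ι ℝ (b (Sum.inr i)) *
            contractLeft (b.coord (Sum.inr j)) (contractLeft (b.coord (Sum.inl j)) x))) := by
        refine Finset.sum_congr rfl fun j _ => ?_
        rw [map_sum, map_sum]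
        exact Finset.sum_congr rfl fun i _ => contract2_pair b i j x
    _ = ∑ i : Fin n, ((x - ι ℝ (b (Sum.inr i)) * contractLeft (b.coord (Sum.inr i)) x
             - ι ℝ (b (Sum.inl i)) * contractLeft (b.coord (Sum.inl i)) x)
        + ι ℝ (b (Sum.inl i)) * (ι ℝ (b (Sum.inr i)) * Lam b x)) := by
        rw [Finset.sum_comm]
        refine Finset.sum_congr rfl fun i _ => ?_
        rw [Finset.sum_add_distrib]
        congr 1
        · rw [Finset.sum_ite_eq' Finset.univ i]
          simp
        · rw [← Finset.mul_sum, ← Finset.mul_sum, ← Lam_apply]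
    _ = omegaB b * Lam b x + (n : ℝ) • x
        - ∑ s : Fin n ⊕ Fin n, ι ℝ (b s) * contractLeft (b.coord s) x := by
        rw [Finset.sum_add_distrib, ← omega_mul_expand, Finset.sum_sub_distrib,
          Finset.sum_sub_distrib, Finset.sum_const, Finset.card_univ, Fintype.card_fin,
          Fintype.sum_sum_type, show ((n : ℝ) • x) = n • x from Nat.cast_smul_eq_nsmul ℝ n x]
        abel

lemma lam_omega_mul {m : ℕ} {x : ExteriorAlgebra ℝ V} (hx : x ∈ ⋀[ℝ]^m V) :
    Lam b (omegaB b * x) = omegaB b * Lam b x + ((n : ℝ) - (m : ℝ)) • x := by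
  rw [lam_omega_raw, euler b hx, sub_smul]
  abel



lemma lam_mem {m : ℕ} {x : ExteriorAlgebra ℝ V} (hx : x ∈ ⋀[ℝ]^m V) :
    Lam b x ∈ ⋀[ℝ]^(m - 2) V := by
  rw [Lam_apply]
  refine Submodule.sum_mem _ fun j _ => ?_
  have := contract_mem (b.coord (Sum.inr j)) (contract_mem (b.coord (Sum.inl j)) hx)
  rwa [show m - 1 - 1 = m - 2 from by omega] at this

lemma lam_low {m : ℕ} (hm : m ≤ 1) {x : ExteriorAlgebra ℝ V} (hx : x ∈ ⋀[ℝ]^m V) :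
    Lam b x = 0 := by
  rw [Lam_apply]
  refine Finset.sum_eq_zero fun j _ => ?_
  have h1 := contract_mem (b.coord (Sum.inl j)) hx
  rw [show m - 1 = 0 from by omega] at h1
  exact contract_mem_zero _ h1

lemma lam_pow_mem (i : ℕ) : ∀ {m : ℕ} {x : ExteriorAlgebra ℝ V}, x ∈ ⋀[ℝ]^m V →
    ((Lam b)^i) x ∈ ⋀[ℝ]^(m - 2*i) V := by
  induction i with
  | zero => intro m x hx; simpa using hx
  | succ i ih =>
    intro m x hx
    rw [pow_succ, Module.End.mul_apply]
    have := ih (lam_mem b hx)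
    rwa [show m - 2 - 2*i = m - 2*(i+1) from by omega] at this

lemma omega_pow_mem (i : ℕ) : (omegaB b)^i ∈ ⋀[ℝ]^(2*i) V := by
  induction i with
  | zero =>
    rw [pow_zero, exteriorPower, Nat.mul_zero, pow_zero, Submodule.one_eq_range]
    exact ⟨1, by simp⟩
  | succ i ih =>
    rw [pow_succ]
    have := mul_mem_pow ih (omega_mem b)
    rwa [show 2*i + 2 = 2*(i+1) from by omega] at this

lemma l5 (i : ℕ) : ∀ (m : ℕ) (x : ExteriorAlgebra ℝ V), x ∈ ⋀[ℝ]^m V →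
    omegaB b * ((Lam b)^i) x
      = ((Lam b)^i) (omegaB b * x)
        + ((i : ℝ) * ((m : ℝ) - (n : ℝ) - (i : ℝ) + 1)) • ((Lam b)^(i-1)) x := by
  induction i with
  | zero => intro m x hx; simp
  | succ i ih =>
    intro m x hx
    rcases Nat.eq_zero_or_pos i with hi | hi
    · subst hi
      simp only [zero_add, pow_one, Nat.sub_self, pow_zero, Module.End.one_apply, Nat.cast_one]
      rw [lam_omega_mul b hx]
      match_scalars <;> push_cast <;> ring
    · by_cases hm : m ≤ 1
      · have hΛ : Lam b x = 0 := lam_low b hm hx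
        have hpow : ∀ j, 1 ≤ j → ((Lam b)^j) x = 0 := by
          intro j hj
          obtain ⟨j', rfl⟩ : ∃ j', j = j' + 1 := ⟨j - 1, by omega⟩
          rw [pow_succ, Module.End.mul_apply, hΛ, map_zero]
        simp only [Nat.add_sub_cancel]
        rw [hpow (i+1) (by omega), hpow i hi, mul_zero, smul_zero, add_zero]
        have hωx : Lam b (omegaB b * x) = ((n:ℝ) - m) • x := by
          rw [lam_omega_mul b hx, hΛ, mul_zero, zero_add]
        have : ((Lam b)^(i+1)) (omegaB b * x) = ((n:ℝ) - m) • ((Lam b)^i) x := by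
          rw [pow_succ, Module.End.mul_apply, hωx, map_smul]
        rw [this, hpow i hi, smul_zero]
      · push_neg at hm
        simp only [Nat.add_sub_cancel]
        have hy : Lam b x ∈ ⋀[ℝ]^(m-2) V := lam_mem b hx
        have IH := ih (m-2) (Lam b x) hy
        have hL : ((Lam b)^(i+1)) x = ((Lam b)^i) (Lam b x) := by
          rw [pow_succ, Module.End.mul_apply]
        have hL2 : ((Lam b)^(i-1)) (Lam b x) = ((Lam b)^i) x := by
          rw [← Module.End.mul_apply, ← pow_succ, show i - 1 + 1 = i from by omega]
        have hωy : omegaB b * Lam b x = Lam b (omegaB b * x) - ((n:ℝ) - m) • x := by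
          rw [lam_omega_mul b hx]; abel
        rw [hL, IH, hωy, map_sub, map_smul, hL2]
        rw [← Module.End.mul_apply (Lam b ^ i), ← pow_succ]
        have hcast : ((m - 2 : ℕ) : ℝ) = (m : ℝ) - 2 := by
          rw [Nat.cast_sub (by omega)]; norm_num
        rw [hcast]
        match_scalars <;> push_cast <;> ring


lemma hw {m : ℕ} (h1 : n ≤ m) (h2 : m ≤ 2*n) {x : ExteriorAlgebra ℝ V}
    (hx : x ∈ ⋀[ℝ]^m V) (h0 : omegaB b * x = 0) :
    ∃ γ ∈ ⋀[ℝ]^(2*n - m) V, x = (omegaB b)^(m - n) * γ := by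
  have key : ∀ i, i ≤ m - n → ∃ c : ℝ, 0 < c ∧ (omegaB b)^i * ((Lam b)^i) x = c • x := by
    intro i
    induction i with
    | zero => intro _; exact ⟨1, one_pos, by simp⟩
    | succ i ih =>
      intro hi
      obtain ⟨c, hc, hcx⟩ := ih (by omega)
      have h5 := l5 b (i+1) m x hx
      rw [h0, map_zero, zero_add, Nat.add_sub_cancel] at h5
      have hcoef : (0:ℝ) < ((i+1:ℕ) : ℝ) * ((m : ℝ) - n - ((i+1:ℕ):ℝ) + 1) := by
        have hle : (i+1) + n ≤ m := by omega
        have : ((i:ℝ) + 1) + (n:ℝ) ≤ (m:ℝ) := by exact_mod_cast hle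
        have h1' : (0:ℝ) < ((i:ℕ)+1 : ℕ) := by positivity
        push_cast
        nlinarith
      refine ⟨((i+1:ℕ):ℝ) * ((m:ℝ) - n - ((i+1:ℕ):ℝ) + 1) * c,
        mul_pos hcoef hc, ?_⟩
      rw [pow_succ, mul_assoc, h5, mul_smul_comm, hcx, smul_smul]
  obtain ⟨c, hc, hcx⟩ := key (m - n) le_rfl
  refine ⟨c⁻¹ • ((Lam b)^(m-n)) x, Submodule.smul_mem _ _ ?_, ?_⟩
  · have := lam_pow_mem b (m-n) hx
    rwa [show m - 2*(m-n) = 2*n - m from by omega] at this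
  · rw [mul_smul_comm, hcx, smul_smul, inv_mul_cancel₀ (ne_of_gt hc), one_smul]

include b in
lemma vanish {m : ℕ} (hm : 2*n < m) {x : ExteriorAlgebra ℝ V}
    (hx : x ∈ ⋀[ℝ]^m V) : x = 0 := by
  have hfin : FiniteDimensional ℝ V := Module.Finite.of_basis b
  have hrank : Module.finrank ℝ V = 2*n := by
    rw [Module.finrank_eq_card_basis b, Fintype.card_sum, Fintype.card_fin]
    omega
  have hspan : Submodule.span ℝ (Set.range (ιMulti ℝ m (M := V))) = ⊥ := by
    rw [Submodule.span_eq_bot]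
    rintro y ⟨v, rfl⟩
    refine AlternatingMap.map_linearDependent (ιMulti ℝ m) v fun hli => ?_
    have := hli.fintype_card_le_finrank
    rw [hrank, Fintype.card_fin] at this
    omega
  rw [← ιMulti_span_fixedDegree] at hx
  rw [hspan] at hx
  simpa using hx

lemma mainLemma (j : ℕ) : ∀ m : ℕ, n ≤ m → ∀ x ∈ ⋀[ℝ]^m V, (omegaB b)^j * x = 0 →
    ∃ γ ∈ ⋀[ℝ]^(2*n - m) V, x = (omegaB b)^(m - n) * γ := by
  induction j with
  | zero =>
    intro m hm x hx h0
    rw [pow_zero, one_mul] at h0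
    exact ⟨0, Submodule.zero_mem _, by rw [h0, mul_zero]⟩
  | succ j ih =>
    intro m hm x hx h0
    by_cases hbig : 2*n < m + 2
    · -- ω * x has degree m + 2 > 2n, hence vanishes
      have hmem2 : omegaB b * x ∈ ⋀[ℝ]^(m+2) V := by
        have := mul_mem_pow (omega_mem b) hx
        rwa [show 2 + m = m + 2 from by omega] at this
      have hωx : omegaB b * x = 0 := vanish b hbig hmem2
      by_cases htop : 2*n < m
      · exact ⟨0, Submodule.zero_mem _, by rw [vanish b htop hx, mul_zero]⟩
      · exact hw b hm (by omega) hx hωx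
    · push_neg at hbig
      have hx' : omegaB b * x ∈ ⋀[ℝ]^(m+2) V := by
        have := mul_mem_pow (omega_mem b) hx
        rwa [show 2 + m = m + 2 from by omega] at this
      have h0' : (omegaB b)^j * (omegaB b * x) = 0 := by
        rw [← mul_assoc, ← pow_succ, h0]
      obtain ⟨u, hu, hequ⟩ := ih (m+2) (by omega) (omegaB b * x) hx' h0'
      rw [show m + 2 - n = (m - n) + 2 from by omega] at hequ
      set w := x - (omegaB b)^(m - n + 1) * u with hw_def
      have hwmem : w ∈ ⋀[ℝ]^m V := by
        refine Submodule.sub_mem _ hx ?_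
        have := mul_mem_pow (omega_pow_mem b (m - n + 1)) hu
        rwa [show 2*(m - n + 1) + (2*n - (m+2)) = m from by omega] at this
      have hww : omegaB b * w = 0 := by
        rw [hw_def, mul_sub, hequ, ← mul_assoc, ← pow_succ']
        rw [show m - n + 1 + 1 = m - n + 2 from by omega, sub_self]
      obtain ⟨γ', hγ', hwγ⟩ := hw b hm (by omega) hwmem hww
      refine ⟨γ' + omegaB b * u, Submodule.add_mem _ hγ' ?_, ?_⟩
      · have := mul_mem_pow (omega_mem b) hu
        rwa [show 2 + (2*n - (m+2)) = 2*n - m from by omega] at this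
      · have hx2 : x = w + (omegaB b)^(m - n + 1) * u := by rw [hw_def]; abel
        rw [hx2, hwγ, mul_add]
        congr 1
        rw [pow_succ, mul_assoc]

end HardLefschetzAux

open HardLefschetzAux in
/-- Hard Lefschetz surjectivity (pointwise linear-algebra form): for `p + k ≥ n`, the
Lefschetz map `L_ω^k : ⋀^p V → ⋀^{p+2k} V`, `α ↦ ω^k ∧ α`, is surjective: every
`β ∈ ⋀^{p+2k} V` can be written as `β = ω^k ∧ α` for some `α ∈ ⋀^p V`. -/
theorem hard_lefschetz_surjective
    {V : Type*} [AddCommGroup V] [Module ℝ V] (n : ℕ) (hn : 0 < n)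
    (b : Module.Basis (Fin n ⊕ Fin n) ℝ V)
    (e f : Fin n → V) (he : ∀ i, e i = b (Sum.inl i)) (hf : ∀ i, f i = b (Sum.inr i))
    (ω : ExteriorAlgebra ℝ V) (hω : ω = ∑ i : Fin n, ι ℝ (e i) * ι ℝ (f i))
    (p k : ℕ) (hpk : n ≤ p + k) :
    ∀ β ∈ ⋀[ℝ]^(p + 2 * k) V, ∃ α ∈ ⋀[ℝ]^p V, β = ω ^ k * α := by
  intro β hβ
  have hωb : ω = omegaB b := by
    rw [hω, omegaB]
    exact Finset.sum_congr rfl fun i _ => by rw [he, hf]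
  rw [hωb]
  set m := p + 2*k with hm
  by_cases hbig : 2*n < m
  · exact ⟨0, Submodule.zero_mem _, by rw [vanish b hbig hβ, mul_zero]⟩
  · push_neg at hbig
    have h1 : n ≤ m := by omega
    have hj : (omegaB b)^(n+1) * β = 0 := by
      refine vanish b (show 2*n < 2*(n+1) + m from by omega) ?_
      exact mul_mem_pow (omega_pow_mem b (n+1)) hβ
    obtain ⟨γ, hγ, hβγ⟩ := mainLemma b (n+1) m h1 β hβ hj
    refine ⟨(omegaB b)^(m - n - k) * γ, ?_, ?_⟩
    · have := mul_mem_pow (omega_pow_mem b (m - n - k)) hγ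
      rwa [show 2*(m-n-k) + (2*n - m) = p from by omega] at this
    · rw [hβγ, ← mul_assoc, ← pow_add, show k + (m - n - k) = m - n from by omega]
end
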